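/- arXiv:0910.3892 — 6 statements merged into one kernel-verified Lean document; each statement's English description precedes it below -/
import Mathlib

section
/- An integer m > 1 is prime if and only if m divides Σ_{k=0}^{m-1} ((m-1)k)!/(k!)^{m-1}. -/
lemma fact_factorial {q n b : ℕ} (hq : q.Prime) (hb : Nat.log q n < b) :
    (Nat.factorial n).factorization q = ∑ i ∈ Finset.Ico 1 b, n / q ^ i := by
  refine le_antisymm ?_ ?_
  · exact (Nat.Prime.pow_dvd_factorial_iff hq hb).mp (Nat.ordProj_dvd _ _)
  · exact (Nat.Prime.pow_dvd_iff_le_factorization hq (Nat.factorial_ne_zero n)).mp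
      ((Nat.Prime.pow_dvd_factorial_iff hq hb).mpr le_rfl)

lemma core {q m k e B : ℕ} (hq : q.Prime) (hm : 1 < m) (hk : 0 < k)
    (hB : Nat.log q ((m - 1) * k) < B)
    (he : e ≤ ∑ i ∈ Finset.Ico 1 B, (m - 1) * (k % q ^ i) / q ^ i) :
    q ^ e ∣ Nat.multinomial (Finset.range (m - 1)) (fun _ => k) := by
  set M := Nat.multinomial (Finset.range (m - 1)) (fun _ => k) with hM
  have hM0 : M ≠ 0 := (Nat.multinomial_pos _ _).ne'
  rw [Nat.Prime.pow_dvd_iff_le_factorization hq hM0]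
  have hspec := Nat.multinomial_spec (Finset.range (m - 1)) (fun _ => k)
  simp only [Finset.prod_const, Finset.sum_const, Finset.card_range, smul_eq_mul] at hspec
  -- hspec : (k ! )^(m-1) * M = ((m-1)*k)!
  have hkB : Nat.log q k < B :=
    lt_of_le_of_lt (Nat.log_mono_right (Nat.le_mul_of_pos_left k (by omega))) hB
  have key : (m - 1) * ((Nat.factorial k).factorization q) + M.factorization q
      = (Nat.factorial ((m - 1) * k)).factorization q := by
    rw [← hspec, Nat.factorization_mul (pow_ne_zero _ (Nat.factorial_ne_zero k)) hM0,
      Nat.factorization_pow]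
    simp
  rw [fact_factorial hq hB, fact_factorial hq hkB] at key
  have point : ∀ i, (m - 1) * k / q ^ i = (m - 1) * (k / q ^ i) + (m - 1) * (k % q ^ i) / q ^ i := by
    intro i
    conv_lhs => rw [← Nat.div_add_mod k (q ^ i)]
    rw [Nat.mul_add, Nat.mul_left_comm, Nat.mul_add_div (pow_pos hq.pos i)]
  have hsum : (∑ i ∈ Finset.Ico 1 B, (m - 1) * k / q ^ i)
      = (m - 1) * (∑ i ∈ Finset.Ico 1 B, k / q ^ i)
        + ∑ i ∈ Finset.Ico 1 B, (m - 1) * (k % q ^ i) / q ^ i := by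
    rw [Finset.mul_sum, ← Finset.sum_add_distrib]
    exact Finset.sum_congr rfl fun i _ => point i
  omega

lemma arith_aux {q : ℕ} (hq : 2 ≤ q) : ∀ e, 3 ≤ e → e + 1 ≤ ∑ t ∈ Finset.range (e - 1), (q ^ (t + 1) - 1) := by
  intro e he
  induction e with
  | zero => omega
  | succ n ih =>
    rcases Nat.lt_or_ge n 3 with h3 | h3
    · -- n + 1 = 3, n = 2 (since 3 ≤ n+1)
      have hn : n = 2 := by omega
      subst hn
      simp [Finset.sum_range_succ]
      have h1 : 1 ≤ q := by omega
      have h2 : 4 ≤ q ^ 2 := by nlinarith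
      omega
    · have := ih h3
      have hr : n + 1 - 1 = (n - 1) + 1 := by omega
      rw [hr, Finset.sum_range_succ]
      have hp : 2 ≤ q ^ (n - 1 + 1) := le_trans hq (Nat.le_self_pow (by omega) q)
      omega

lemma arith {q e : ℕ} (hq : 2 ≤ q) (he : 2 ≤ e) (h4 : ¬(q = 2 ∧ e = 2)) :
    e ≤ ∑ t ∈ Finset.range (e - 1), (q ^ (t + 1) - 1) := by
  rcases Nat.lt_or_ge e 3 with h3 | h3
  · have he2 : e = 2 := by omega
    subst he2
    have hq3 : 3 ≤ q := by omega
    simp [Finset.sum_range_succ]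
    omega
  · exact le_trans (by omega) (arith_aux hq e h3)

lemma comp_case {m k : ℕ} (hm : 1 < m) (hnp : ¬ m.Prime) (hm4 : m ≠ 4) (hk : 0 < k) :
    m ∣ Nat.multinomial (Finset.range (m - 1)) (fun _ => k) := by
  rw [Nat.dvd_iff_prime_pow_dvd_dvd]
  intro q c hq hqc
  set e := m.factorization q with hed
  have hce : c ≤ e := (Nat.Prime.pow_dvd_iff_le_factorization hq (by omega)).mp hqc
  suffices h : q ^ e ∣ Nat.multinomial (Finset.range (m - 1)) (fun _ => k) from
    dvd_trans (pow_dvd_pow q hce) h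
  have hqe : q ^ e ∣ m := Nat.ordProj_dvd m q
  have hq2 := hq.two_le
  set a := k.factorization q with had
  have ha1 : q ^ a ∣ k := Nat.ordProj_dvd k q
  have ha2 : ¬ q ^ (a + 1) ∣ k := Nat.pow_succ_factorization_not_dvd hk.ne' hq
  have hak : a < k := lt_of_lt_of_le (Nat.lt_pow_self (n := a) hq.one_lt) (Nat.le_of_dvd hk ha1)
  have hmod : ∀ i, a < i → q ^ a ≤ k % q ^ i := by
    intro i hi
    have hd : q ^ a ∣ k % q ^ i :=
      (Nat.dvd_mod_iff (pow_dvd_pow q hi.le)).mpr ha1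
    have hne : k % q ^ i ≠ 0 := by
      intro h0
      exact ha2 (dvd_trans (pow_dvd_pow q hi) (Nat.dvd_of_mod_eq_zero h0))
    exact Nat.le_of_dvd (Nat.pos_of_ne_zero hne) hd
  have hN0 : (m - 1) * k ≠ 0 := by
    have : 1 ≤ m - 1 := by omega
    positivity
  set B := (m - 1) * k + 1 with hBd
  have hB : Nat.log q ((m - 1) * k) < B := by
    have := Nat.log_le_self q ((m - 1) * k)
    omega
  apply core hq hm hk hB
  rcases Nat.lt_or_ge (q ^ e) m with hlt | hge
  -- Case 1 : q ^ e < m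
  · have hqem : q ^ e ≤ m - 1 := by omega
    have hea : e ≤ m - 2 := by
      have := Nat.lt_pow_self (n := e) hq.one_lt
      omega
    have hsub : Finset.Ico (a + 1) (a + e + 1) ⊆ Finset.Ico 1 B := by
      apply Finset.Ico_subset_Ico (by omega)
      have hk1 : k + (m - 2) ≤ (m - 1) * k := by
        obtain ⟨m', rfl⟩ : ∃ m', m = m' + 2 := ⟨m - 2, by omega⟩
        have h : m' + 2 - 1 = m' + 1 := rfl
        rw [h]; simp; nlinarith
      omega
    calc e = (Finset.Ico (a + 1) (a + e + 1)).card := by rw [Nat.card_Ico]; omega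
      _ = (Finset.Ico (a + 1) (a + e + 1)).card • 1 := by simp
      _ ≤ ∑ i ∈ Finset.Ico (a + 1) (a + e + 1), (m - 1) * (k % q ^ i) / q ^ i := by
          apply Finset.card_nsmul_le_sum
          intro i hi
          rw [Finset.mem_Ico] at hi
          rw [Nat.one_le_div_iff (pow_pos hq.pos i)]
          calc q ^ i ≤ q ^ (e + a) := Nat.pow_le_pow_right hq.pos (by omega)
            _ = q ^ e * q ^ a := by rw [pow_add]
            _ ≤ (m - 1) * (k % q ^ i) := Nat.mul_le_mul hqem (hmod i hi.1)
      _ ≤ _ := Finset.sum_le_sum_of_subset hsub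
  -- Case 2 : q ^ e = m, prime power
  · have heq : q ^ e = m := le_antisymm (Nat.le_of_dvd (by omega) hqe) hge
    have he2 : 2 ≤ e := by
      by_contra h
      push_neg at h
      have h01 : e = 0 ∨ e = 1 := by omega
      rcases h01 with h0 | h1
      · rw [h0, pow_zero] at heq; omega
      · rw [h1, pow_one] at heq; exact hnp (heq ▸ hq)
    have h4 : ¬(q = 2 ∧ e = 2) := by
      rintro ⟨hq2', he2'⟩
      rw [hq2', he2'] at heq
      norm_num at heq
      exact hm4 heq.symm
    have hsub : Finset.Ico (a + 1) (a + e) ⊆ Finset.Ico 1 B := by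
      apply Finset.Ico_subset_Ico (by omega)
      have hek : e ≤ q ^ e := Nat.le_of_lt (Nat.lt_pow_self (n := e) hq.one_lt)
      have hk1 : k + (m - 2) ≤ (m - 1) * k := by
        obtain ⟨m', rfl⟩ : ∃ m', m = m' + 2 := ⟨m - 2, by omega⟩
        have h : m' + 2 - 1 = m' + 1 := rfl
        rw [h]; simp; nlinarith
      omega
    have hpoint : ∀ i ∈ Finset.Ico (a + 1) (a + e),
        q ^ (e + a - i) - 1 ≤ (m - 1) * (k % q ^ i) / q ^ i := by
      intro i hi
      rw [Finset.mem_Ico] at hi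
      rw [Nat.le_div_iff_mul_le (pow_pos hq.pos i)]
      have h1 : (q ^ (e + a - i) - 1) * q ^ i = q ^ (e + a) - q ^ i := by
        rw [Nat.sub_mul, one_mul, ← pow_add]
        congr 2
        omega
      have h2 : (q ^ e - 1) * q ^ a = q ^ (e + a) - q ^ a := by
        rw [Nat.sub_mul, one_mul, ← pow_add]
      have h3 : (q ^ e - 1) * q ^ a ≤ (m - 1) * (k % q ^ i) :=
        Nat.mul_le_mul (by omega) (hmod i hi.1)
      have h4 : q ^ a ≤ q ^ i := Nat.pow_le_pow_right hq.pos (by omega)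
      omega
    calc e ≤ ∑ t ∈ Finset.range (e - 1), (q ^ (t + 1) - 1) := arith hq2 he2 h4
      _ = ∑ i ∈ Finset.Ico (a + 1) (a + e), (q ^ (e + a - i) - 1) := by
          rw [Finset.sum_Ico_eq_sum_range]
          rw [← Finset.sum_range_reflect (fun t => q ^ (t + 1) - 1) (e - 1)]
          have hc : a + e - (a + 1) = e - 1 := by omega
          rw [hc]
          refine Finset.sum_congr rfl fun j hj => ?_
          rw [Finset.mem_range] at hj
          congr 2
          omega
      _ ≤ ∑ i ∈ Finset.Ico (a + 1) (a + e), (m - 1) * (k % q ^ i) / q ^ i :=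
          Finset.sum_le_sum hpoint
      _ ≤ _ := Finset.sum_le_sum_of_subset hsub

lemma prime_case {p k : ℕ} (hp : p.Prime) (hk : 2 ≤ k) (hkp : k < p) :
    p ∣ Nat.multinomial (Finset.range (p - 1)) (fun _ => k) := by
  have hp2 := hp.two_le
  obtain ⟨p', rfl⟩ : ∃ p', p = p' + 2 := ⟨p - 2, by omega⟩
  have hN : 2 ≤ (p' + 2 - 1) * k := by
    have h : p' + 2 - 1 = p' + 1 := rfl
    rw [h]; nlinarith
  have := core (m := p' + 2) (k := k) (e := 1) (B := (p' + 2 - 1) * k) hp hp.one_lt (by omega)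
    (Nat.log_lt_self _ (by omega)) ?_
  · simpa using this
  · have h1 : 1 ≤ (p' + 2 - 1) * (k % (p' + 2) ^ 1) / (p' + 2) ^ 1 := by
      rw [Nat.one_le_div_iff (pow_pos hp.pos 1)]
      rw [pow_one, Nat.mod_eq_of_lt hkp]
      simp; nlinarith
    calc 1 ≤ (p' + 2 - 1) * (k % (p' + 2) ^ 1) / (p' + 2) ^ 1 := h1
      _ ≤ _ := Finset.single_le_sum (f := fun i => (p' + 2 - 1) * (k % (p' + 2) ^ i) / (p' + 2) ^ i)
          (fun _ _ => Nat.zero_le _) (Finset.mem_Ico.mpr ⟨le_rfl, by omega⟩)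

lemma mult_zero (s : Finset ℕ) : Nat.multinomial s (fun _ => 0) = 1 := by
  simp [Nat.multinomial]

lemma mult_one (n : ℕ) :
    Nat.multinomial (Finset.range n) (fun _ => 1) = Nat.factorial n := by
  simp [Nat.multinomial]

theorem stmt_14 (m : ℕ) (hm : 1 < m) :
    m.Prime ↔ m ∣ ∑ k ∈ Finset.range m, Nat.multinomial (Finset.range (m - 1)) (fun _ => k) := by
  constructor
  · intro hp
    haveI : Fact m.Prime := ⟨hp⟩
    obtain ⟨n, rfl⟩ : ∃ n, m = n + 2 := ⟨m - 2, by omega⟩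
    rw [Finset.sum_range_succ', Finset.sum_range_succ']
    have htail : (n + 2) ∣ ∑ i ∈ Finset.range n,
        Nat.multinomial (Finset.range (n + 2 - 1)) (fun _ => i + 1 + 1) := by
      apply Finset.dvd_sum
      intro i hi
      rw [Finset.mem_range] at hi
      exact prime_case hp (by omega) (by omega)
    have hw : (n + 2) ∣ Nat.multinomial (Finset.range (n + 2 - 1)) (fun _ => 0 + 1)
        + Nat.multinomial (Finset.range (n + 2 - 1)) (fun _ => 0) := by
      have h0 : Nat.multinomial (Finset.range (n + 2 - 1)) (fun _ => (0:ℕ)) = 1 :=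
        mult_zero _
      have h1 : Nat.multinomial (Finset.range (n + 2 - 1)) (fun _ => 0 + 1)
          = Nat.factorial (n + 2 - 1) := mult_one _
      rw [h0, h1]
      have hw' : ((Nat.factorial (n + 2 - 1) + 1 : ℕ) : ZMod (n + 2)) = 0 := by
        push_cast
        rw [show ((Nat.factorial (n + 1) : ZMod (n + 2))) = -1 from ZMod.wilsons_lemma (n + 2)]
        ring
      exact (ZMod.natCast_eq_zero_iff _ _).mp hw'
    rw [Nat.add_assoc]
    exact Nat.dvd_add htail hw
  · intro hdvd
    by_contra hnp
    by_cases hm4 : m = 4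
    · subst hm4
      revert hdvd
      decide
    · obtain ⟨n, rfl⟩ : ∃ n, m = n + 1 := ⟨m - 1, by omega⟩
      rw [Finset.sum_range_succ'] at hdvd
      have htail : (n + 1) ∣ ∑ i ∈ Finset.range n,
          Nat.multinomial (Finset.range (n + 1 - 1)) (fun _ => i + 1) :=
        Finset.dvd_sum fun i _ => comp_case hm hnp hm4 (by omega)
      have h1 : (n + 1) ∣ Nat.multinomial (Finset.range (n + 1 - 1)) (fun _ => 0) :=
        (Nat.dvd_add_right htail).mp hdvd
      rw [mult_zero] at h1
      have := Nat.le_of_dvd one_pos h1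
      omega
end

section
/- Let p be a prime and n a positive integer. If n ≢ 1 (mod p), or some digit of n in base p is greater than 1, then Σ_{k=0}^{n-1} ((p-1)k)!/(k!)^{p-1} ≡ 0 (mod p). -/
section Aux

variable {p : ℕ} [hfp : Fact p.Prime]

private lemma multi_eq_prod (r k : ℕ) :
    Nat.multinomial (Finset.range r) (fun _ => k) =
      ∏ i ∈ Finset.range r, ((i + 1) * k).choose k := by
  induction r with
  | zero => simp
  | succ r ih =>
    rw [Finset.range_add_one, Nat.multinomial_insert Finset.notMem_range_self, ih,
      Finset.prod_insert Finset.notMem_range_self]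
    congr 2
    rw [Finset.sum_const, Finset.card_range, smul_eq_mul]
    ring

private lemma lucasZ (n k : ℕ) :
    ((n.choose k : ℕ) : ZMod p) =
      (((n / p).choose (k / p) : ℕ) : ZMod p) * (((n % p).choose (k % p) : ℕ) : ZMod p) := by
  have h := (Choose.choose_modEq_choose_mod_mul_choose_div_nat (p := p) (n := n) (k := k))
  rw [← ZMod.natCast_eq_natCast_iff] at h
  push_cast at h
  rw [h, mul_comm]

private lemma factor_zero (j s : ℕ) (hs2 : 2 ≤ s) (hsp : s < p) :
    ∃ c ∈ Finset.range (p - 1),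
      ((((c + 1) * (p * j + s)).choose (p * j + s) : ℕ) : ZMod p) = 0 := by
  have hp := hfp.out
  obtain ⟨c, m, h1, hmlt⟩ : ∃ c m, s * c + m = p ∧ m < s :=
    ⟨p / s, p % s, Nat.div_add_mod p s, Nat.mod_lt _ (by omega)⟩
  have hm0 : 0 < m := by
    rcases Nat.eq_zero_or_pos m with h | h
    · exfalso
      have : s ∣ p := ⟨c, by omega⟩
      rcases (Nat.Prime.eq_one_or_self_of_dvd hp s this) with h' | h' <;> omega
    · exact h
  have hp3 : 3 ≤ p := by
    rcases hp.two_le.lt_or_eq with h | h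
    · omega
    · omega
  have hsc2 : 2 * c ≤ s * c := Nat.mul_le_mul_right c hs2
  have hcmem : c ∈ Finset.range (p - 1) := by
    rw [Finset.mem_range]
    have hscp : s * c ≤ p := by omega
    omega
  refine ⟨c, hcmem, ?_⟩
  have key : (c + 1) * s = p + (s - m) := by
    have h2 : (c + 1) * s = s * c + s := by ring
    rw [h2]; omega
  have hn : (c + 1) * (p * j + s) = p * ((c + 1) * j + 1) + (s - m) := by
    have h3 : (c + 1) * (p * j + s) = p * ((c + 1) * j) + (c + 1) * s := by ring
    rw [h3, key]; ring
  rw [lucasZ]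
  have hmod : ((c + 1) * (p * j + s)) % p = s - m := by
    rw [hn, Nat.mul_add_mod, Nat.mod_eq_of_lt (by omega)]
  have hkmod : (p * j + s) % p = s := by
    rw [Nat.mul_add_mod, Nat.mod_eq_of_lt hsp]
  have hz : (s - m).choose s = 0 := Nat.choose_eq_zero_of_lt (by omega)
  rw [hmod, hkmod, hz]
  simp

private lemma key2 (j s : ℕ) (hsp : s < p) :
    ((Nat.multinomial (Finset.range (p - 1)) (fun _ => p * j + s) : ℕ) : ZMod p) =
      ((Nat.multinomial (Finset.range (p - 1)) (fun _ => j) : ℕ) : ZMod p) *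
        ((Nat.multinomial (Finset.range (p - 1)) (fun _ => s) : ℕ) : ZMod p) := by
  have hp := hfp.out
  rw [multi_eq_prod, multi_eq_prod, multi_eq_prod]
  push_cast
  by_cases hs : s ≤ 1
  · rw [← Finset.prod_mul_distrib]
    refine Finset.prod_congr rfl fun i hi => ?_
    rw [Finset.mem_range] at hi
    have h1 : (i + 1) * s < p := by
      calc (i + 1) * s ≤ (i + 1) * 1 := Nat.mul_le_mul_left _ hs
        _ < p := by omega
    have hrw : (i + 1) * (p * j + s) = p * ((i + 1) * j) + (i + 1) * s := by ring
    rw [lucasZ, hrw, Nat.mul_add_div hp.pos, Nat.mul_add_mod,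
      Nat.mul_add_div hp.pos, Nat.mul_add_mod,
      Nat.div_eq_of_lt h1, Nat.mod_eq_of_lt h1, Nat.div_eq_of_lt hsp, Nat.mod_eq_of_lt hsp]
    simp
  · push_neg at hs
    obtain ⟨c, hc, hc0⟩ := factor_zero j s hs hsp
    obtain ⟨c', hc', hc0'⟩ := factor_zero 0 s hs hsp
    rw [Finset.prod_eq_zero hc hc0]
    have : ∏ i ∈ Finset.range (p - 1), (((i + 1) * s).choose s : ZMod p) = 0 := by
      refine Finset.prod_eq_zero hc' ?_
      simpa using hc0'
    rw [this, mul_zero]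

private lemma Mval (s : ℕ) (hsp : s < p) :
    ((Nat.multinomial (Finset.range (p - 1)) (fun _ => s) : ℕ) : ZMod p) =
      if s = 0 then 1 else if s = 1 then -1 else 0 := by
  have hp := hfp.out
  rcases Nat.lt_or_ge s 2 with h2 | h2
  · interval_cases s
    · simp [multi_eq_prod]
    · have hw : ((Finset.range (p - 1)).prod (fun x => x + 1) : ℕ) = (p - 1).factorial :=
        Finset.prod_range_add_one_eq_factorial (p - 1)
      rw [multi_eq_prod]
      simp only [mul_one, Nat.choose_one_right, Nat.one_ne_zero, if_false, if_true, if_pos rfl]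
      rw [hw]
      exact_mod_cast ZMod.wilsons_lemma p
  · rw [if_neg (by omega), if_neg (by omega)]
    obtain ⟨c, hc, hc0⟩ := factor_zero 0 s h2 hsp
    rw [multi_eq_prod]
    push_cast
    refine Finset.prod_eq_zero hc ?_
    simpa using hc0

private lemma msum_small (r : ℕ) (hr : r ≤ p) :
    (∑ i ∈ Finset.range r,
        ((Nat.multinomial (Finset.range (p - 1)) (fun _ => i) : ℕ) : ZMod p)) =
      if r = 1 then 1 else 0 := by
  have hsum : (∑ i ∈ Finset.range r,
      ((Nat.multinomial (Finset.range (p - 1)) (fun _ => i) : ℕ) : ZMod p)) =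
      ∑ i ∈ Finset.range r, (if i = 0 then (1 : ZMod p) else if i = 1 then -1 else 0) := by
    refine Finset.sum_congr rfl fun i hi => ?_
    rw [Finset.mem_range] at hi
    exact Mval i (by omega)
  rw [hsum]
  match r with
  | 0 => simp
  | 1 => simp
  | (m + 2) =>
    rw [Finset.sum_range_succ', Finset.sum_range_succ']
    simp

private lemma sum_pq (q : ℕ) :
    (∑ k ∈ Finset.range (p * q),
        ((Nat.multinomial (Finset.range (p - 1)) (fun _ => k) : ℕ) : ZMod p)) = 0 := by
  have hp := hfp.out
  induction q with
  | zero => simp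
  | succ q ih =>
    have h1 : p * (q + 1) = p * q + p := by ring
    rw [h1, Finset.sum_range_add, ih, zero_add]
    have h2 : ∀ i ∈ Finset.range p,
        ((Nat.multinomial (Finset.range (p - 1)) (fun _ => p * q + i) : ℕ) : ZMod p) =
        ((Nat.multinomial (Finset.range (p - 1)) (fun _ => q) : ℕ) : ZMod p) *
          ((Nat.multinomial (Finset.range (p - 1)) (fun _ => i) : ℕ) : ZMod p) := by
      intro i hi
      rw [Finset.mem_range] at hi
      exact key2 q i hi
    rw [Finset.sum_congr rfl h2, ← Finset.mul_sum, msum_small p le_rfl,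
      if_neg hp.one_lt.ne', mul_zero]

private lemma Ssum (n : ℕ) :
    (∑ k ∈ Finset.range n,
        ((Nat.multinomial (Finset.range (p - 1)) (fun _ => k) : ℕ) : ZMod p)) =
      if n % p = 1 then
        ((Nat.multinomial (Finset.range (p - 1)) (fun _ => n / p) : ℕ) : ZMod p)
      else 0 := by
  have hp := hfp.out
  conv_lhs => rw [← Nat.div_add_mod n p]
  rw [Finset.sum_range_add, sum_pq, zero_add]
  have h2 : ∀ i ∈ Finset.range (n % p),
      ((Nat.multinomial (Finset.range (p - 1)) (fun _ => p * (n / p) + i) : ℕ) : ZMod p) =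
      ((Nat.multinomial (Finset.range (p - 1)) (fun _ => n / p) : ℕ) : ZMod p) *
        ((Nat.multinomial (Finset.range (p - 1)) (fun _ => i) : ℕ) : ZMod p) := by
    intro i hi
    rw [Finset.mem_range] at hi
    exact key2 (n / p) i (lt_of_lt_of_le hi (Nat.le_of_lt (Nat.mod_lt _ hp.pos)))
  rw [Finset.sum_congr rfl h2, ← Finset.mul_sum,
    msum_small (n % p) (Nat.le_of_lt (Nat.mod_lt _ hp.pos))]
  split_ifs <;> simp

private lemma Mdig (q : ℕ) (hq : ∃ d ∈ Nat.digits p q, 1 < d) :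
    ((Nat.multinomial (Finset.range (p - 1)) (fun _ => q) : ℕ) : ZMod p) = 0 := by
  have hp := hfp.out
  induction q using Nat.strong_induction_on with
  | _ q ih =>
    obtain ⟨d, hd, hd1⟩ := hq
    rcases Nat.eq_zero_or_pos q with h0 | h0
    · subst h0; simp at hd
    · rw [Nat.digits_def' hp.one_lt h0] at hd
      have hq' : q = p * (q / p) + q % p := (Nat.div_add_mod q p).symm
      have hsplit : ((Nat.multinomial (Finset.range (p - 1)) (fun _ => q) : ℕ) : ZMod p) =
          ((Nat.multinomial (Finset.range (p - 1)) (fun _ => q / p) : ℕ) : ZMod p) *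
            ((Nat.multinomial (Finset.range (p - 1)) (fun _ => q % p) : ℕ) : ZMod p) := by
        nth_rewrite 1 [hq']
        exact key2 (q / p) (q % p) (Nat.mod_lt _ hp.pos)
      rcases List.mem_cons.mp hd with h | h
      · rw [hsplit, Mval (q % p) (Nat.mod_lt _ hp.pos), if_neg (by omega), if_neg (by omega),
          mul_zero]
      · rw [hsplit, ih (q / p) (Nat.div_lt_self h0 hp.one_lt) ⟨d, h, hd1⟩, zero_mul]

end Aux

theorem stmt_15 (p : ℕ) (hp : p.Prime) (n : ℕ) (hn : 0 < n)
    (h : ¬ n ≡ 1 [MOD p] ∨ ∃ d ∈ Nat.digits p n, 1 < d) :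
    (∑ k ∈ Finset.range n, (Nat.multinomial (Finset.range (p - 1)) (fun _ => k) : ZMod p))
      = 0 := by
  haveI : Fact p.Prime := ⟨hp⟩
  rw [Ssum]
  split_ifs with h1
  · rcases h with h | ⟨d, hd, hd1⟩
    · exact absurd (show n ≡ 1 [MOD p] by
        unfold Nat.ModEq; rw [Nat.mod_eq_of_lt hp.one_lt]; exact h1) h
    · rw [Nat.digits_def' hp.one_lt hn] at hd
      rcases List.mem_cons.mp hd with h' | h'
      · omega
      · exact Mdig (n / p) ⟨d, h', hd1⟩
  · rfl
end

section
/- Let p be a prime and n a positive integer with n ≡ 1 (mod p) and all base-p digits of n in {0,1}. Then Σ_{k=0}^{n-1} ((p-1)k)!/(k!)^{p-1} ≡ (-1)^{ψ_p(n)-1} (mod p), where ψ_p(n) is the sum of the base-p digits of n. -/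
open Finset

section aux

variable {p : ℕ} [Fact p.Prime]

lemma multinomial_const_eq (m k : ℕ) :
    Nat.multinomial (Finset.range m) (fun _ => k) = ∏ i ∈ Finset.range m, ((i+1)*k).choose k := by
  induction m with
  | zero => simp
  | succ m ih =>
    rw [Finset.range_add_one, Nat.multinomial_insert (by simp), ih,
      Finset.prod_insert (by simp)]
    congr 2
    simp only [Finset.sum_const, Finset.card_range, smul_eq_mul]
    ring

lemma lucas_digit (a b c d : ℕ) (hb : b < p) (hd : d < p) :
    (((p*a+b).choose (p*c+d) : ℕ) : ZMod p) = (b.choose d : ℕ) * ((a.choose c : ℕ) : ZMod p) := by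
  have h := Choose.choose_modEq_choose_mod_mul_choose_div_nat (p := p) (n := p*a+b) (k := p*c+d)
  have hp2 : 0 < p := (Fact.out : p.Prime).pos
  rw [Nat.mul_add_mod, Nat.mul_add_mod, Nat.mul_add_div hp2, Nat.mul_add_div hp2,
    Nat.mod_eq_of_lt hb, Nat.mod_eq_of_lt hd, Nat.div_eq_of_lt hb, Nat.div_eq_of_lt hd,
    Nat.add_zero, Nat.add_zero] at h
  calc (((p*a+b).choose (p*c+d) : ℕ) : ZMod p)
      = ((b.choose d * a.choose c : ℕ) : ZMod p) := by
        exact_mod_cast (ZMod.natCast_eq_natCast_iff _ _ _).mpr h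
    _ = _ := by push_cast; ring

/-- `M k` in `ZMod p` -/
noncomputable def Mz (p k : ℕ) : ZMod p :=
  (Nat.multinomial (Finset.range (p - 1)) (fun _ => k) : ZMod p)

lemma Mz_eq_prod (k : ℕ) :
    Mz p k = ∏ i ∈ Finset.range (p-1), ((((i+1)*k).choose k : ℕ) : ZMod p) := by
  rw [Mz, multinomial_const_eq]; push_cast; rfl

lemma Mz_p_mul (q : ℕ) : Mz p (p * q) = Mz p q := by
  rw [Mz_eq_prod, Mz_eq_prod]
  refine Finset.prod_congr rfl (fun i _ => ?_)
  have hp2 : 0 < p := (Fact.out : p.Prime).pos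
  have h1 : (i+1)*(p*q) = p*((i+1)*q) + 0 := by ring
  have h2 : p*q = p*q + 0 := by ring
  rw [h1, h2, lucas_digit _ 0 _ 0 hp2 hp2]
  simp

lemma Mz_p_mul_add_one (q : ℕ) : Mz p (p * q + 1) = - Mz p q := by
  have hp : p.Prime := Fact.out
  rw [Mz_eq_prod, Mz_eq_prod]
  have key : ∀ i ∈ Finset.range (p-1),
      ((((i+1)*(p*q+1)).choose (p*q+1) : ℕ) : ZMod p)
        = ((i+1 : ℕ) : ZMod p) * ((((i+1)*q).choose q : ℕ) : ZMod p) := by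
    intro i hi
    have hi' : i + 1 < p := by
      have := Finset.mem_range.mp hi
      omega
    have h1 : (i+1)*(p*q+1) = p*((i+1)*q) + (i+1) := by ring
    have h2 : p*q+1 = p*q + 1 := rfl
    rw [h1, h2, lucas_digit _ (i+1) _ 1 hi' hp.one_lt]
    simp [Nat.choose_one_right]
  rw [Finset.prod_congr rfl key, Finset.prod_mul_distrib]
  have hfac : (∏ i ∈ Finset.range (p-1), ((i+1 : ℕ) : ZMod p))
      = ((Nat.factorial (p-1) : ℕ) : ZMod p) := by
    rw [← Finset.prod_range_add_one_eq_factorial, Nat.cast_prod]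
  rw [hfac, ZMod.wilsons_lemma]
  ring

lemma Mz_p_mul_add (q r : ℕ) (hr2 : 2 ≤ r) (hrp : r < p) : Mz p (p * q + r) = 0 := by
  have hp : p.Prime := Fact.out
  have hp2 : 0 < p := hp.pos
  obtain ⟨j, hj⟩ : ∃ j, j = p / r + 1 := ⟨_, rfl⟩
  have hpr : p % r ≠ 0 := by
    intro h
    rcases hp.eq_one_or_self_of_dvd r (Nat.dvd_of_mod_eq_zero h) with h1 | h1 <;> omega
  have hdm := Nat.div_add_mod p r
  have hmr : p % r < r := Nat.mod_lt _ (by omega)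
  have hx : j * r = r * (p / r) + r := by rw [hj]; ring
  have hj1 : 1 ≤ j := by rw [hj]; exact Nat.succ_le_succ (Nat.zero_le _)
  clear hj
  have hjr : j * r = p + (r - p % r) := by omega
  set t := r - p % r with ht
  have htr : t < r := by omega
  have h2j : j * 2 ≤ j * r := Nat.mul_le_mul_left j hr2
  have hb : j * 2 ≤ p + t := by omega
  have hjp : j ≤ p - 1 := by omega
  rw [Mz_eq_prod]
  apply Finset.prod_eq_zero (i := j - 1) (Finset.mem_range.mpr (by omega))
  have hjj : j - 1 + 1 = j := by omega
  rw [hjj]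
  have h1 : j*(p*q+r) = p*(j*q+1) + t := by
    have : j*(p*q+r) = p*(j*q) + j*r := by ring
    rw [this, hjr]; ring
  rw [h1, lucas_digit _ t _ r (by omega) hrp, Nat.choose_eq_zero_of_lt htr]
  simp

lemma Mz_digits (k : ℕ) (hk : ∀ d ∈ Nat.digits p k, d ≤ 1) :
    Mz p k = (-1) ^ (Nat.digits p k).sum := by
  have hp : p.Prime := Fact.out
  induction k using Nat.strong_induction_on with
  | _ k ih =>
    rcases Nat.eq_zero_or_pos k with rfl | hk0
    · simp [Mz, multinomial_const_eq]
    · have hdig : Nat.digits p k = k % p :: Nat.digits p (k / p) :=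
        Nat.digits_def' hp.one_lt hk0
      have hkd : k = p * (k / p) + k % p := (Nat.div_add_mod k p).symm
      have hk1 : k % p ≤ 1 := by
        apply hk
        rw [hdig]; exact List.mem_cons_self
      have hdivlt : k / p < k := Nat.div_lt_self hk0 hp.one_lt
      have htail : ∀ d ∈ Nat.digits p (k / p), d ≤ 1 := by
        intro d hd; apply hk; rw [hdig]; exact List.mem_cons_of_mem _ hd
      have ihd := ih (k / p) hdivlt htail
      have hL : Mz p k = Mz p (p * (k / p) + k % p) := by rw [Nat.div_add_mod]
      interval_cases h : k % p
      · rw [hL, Nat.add_zero, Mz_p_mul, ihd, hdig]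
        simp
      · rw [hL, Mz_p_mul_add_one, ihd, hdig]
        simp only [List.sum_cons]
        rw [pow_add]
        ring

lemma sum_block (m : ℕ) :
    (∑ r ∈ Finset.range p, Mz p (p * m + r)) = 0 := by
  have hp : p.Prime := Fact.out
  have h2p : 2 ≤ p := hp.two_le
  have hsplit : (∑ r ∈ Finset.range p, Mz p (p * m + r))
      = (∑ r ∈ Finset.Ico 0 2, Mz p (p * m + r)) + ∑ r ∈ Finset.Ico 2 p, Mz p (p * m + r) := by
    rw [Finset.range_eq_Ico, Finset.sum_Ico_consecutive _ (Nat.zero_le 2) h2p]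
  rw [hsplit]
  have h1 : (∑ r ∈ Finset.Ico 0 2, Mz p (p * m + r)) = Mz p (p*m) + Mz p (p*m+1) := by
    rw [← Finset.range_eq_Ico]
    simp [Finset.sum_range_succ]
  have h2 : (∑ r ∈ Finset.Ico 2 p, Mz p (p * m + r)) = 0 := by
    apply Finset.sum_eq_zero
    intro r hr
    rw [Finset.mem_Ico] at hr
    exact Mz_p_mul_add m r hr.1 hr.2
  rw [h1, h2, Mz_p_mul, Mz_p_mul_add_one]
  ring

lemma sum_p_mul (m : ℕ) : (∑ k ∈ Finset.range (p * m), Mz p k) = 0 := by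
  induction m with
  | zero => simp
  | succ m ih =>
    have : p * (m + 1) = p * m + p := by ring
    rw [this, Finset.sum_range_add]
    rw [ih, zero_add]
    exact sum_block m

end aux

theorem stmt_16 (p : ℕ) (hp : p.Prime) (n : ℕ) (hn : 0 < n)
    (h1 : n ≡ 1 [MOD p]) (h2 : ∀ d ∈ Nat.digits p n, d ≤ 1) :
    (∑ k ∈ Finset.range n, (Nat.multinomial (Finset.range (p - 1)) (fun _ => k) : ZMod p))
      = (-1) ^ ((Nat.digits p n).sum - 1) := by
  haveI : Fact p.Prime := ⟨hp⟩
  have hmod : n % p = 1 := by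
    have := h1
    unfold Nat.ModEq at this
    rw [Nat.mod_eq_of_lt hp.one_lt] at this
    exact this
  have hn' : n = p * (n / p) + 1 := by
    conv_lhs => rw [← Nat.div_add_mod n p]
    rw [hmod]
  have hdig : Nat.digits p n = 1 :: Nat.digits p (n / p) := by
    rw [Nat.digits_def' hp.one_lt hn, hmod]
  have hsum : (∑ k ∈ Finset.range n, (Nat.multinomial (Finset.range (p - 1)) (fun _ => k) : ZMod p))
      = ∑ k ∈ Finset.range n, Mz p k := rfl
  rw [hsum]
  conv_lhs => rw [hn']
  rw [Finset.sum_range_succ, sum_p_mul, zero_add, Mz_p_mul]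
  have htail : ∀ d ∈ Nat.digits p (n / p), d ≤ 1 := by
    intro d hd; apply h2; rw [hdig]; exact List.mem_cons_of_mem _ hd
  rw [Mz_digits _ htail, hdig]
  simp
end

section
/- Let p be a prime and n a positive integer. If all base-p digits of n lie in {0,1}, then ∏_{j=1}^{p-1} C(jn, n) ≡ (-1)^{ψ_p(n)} (mod p), where ψ_p(n) is the sum of the base-p digits of n; otherwise ∏_{j=1}^{p-1} C(jn, n) ≡ 0 (mod p). -/
/-- If all base-`p` digits of `m` below position `i` are at most 1, then
`(p-1) * (m % p^i) ≤ p^i - 1`. -/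
lemma aux_small {p : ℕ} (hp : 2 ≤ p) :
    ∀ (i m : ℕ), (∀ k < i, m / p ^ k % p ≤ 1) → (p - 1) * (m % p ^ i) ≤ p ^ i - 1 := by
  intro i
  induction i with
  | zero => intro m _; simp [Nat.mod_one]
  | succ i ih =>
    intro m hm
    have h0 : m % p ≤ 1 := by simpa using hm 0 (Nat.succ_pos _)
    have ht : (p - 1) * (m / p % p ^ i) ≤ p ^ i - 1 := by
      apply ih
      intro k hk
      have := hm (k + 1) (by omega)
      simpa [Nat.div_div_eq_div_mul, pow_succ'] using this
    have hsplit : m % p ^ (i + 1) = m % p + p * (m / p % p ^ i) := by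
      rw [pow_succ']; exact Nat.mod_mul
    have hpi : 1 ≤ p ^ i := Nat.one_le_pow _ _ (by omega)
    have hps : p ^ (i + 1) = p * p ^ i := by rw [pow_succ']
    rw [hsplit]
    have : (p - 1) * (m % p + p * (m / p % p ^ i))
        = (p - 1) * (m % p) + p * ((p - 1) * (m / p % p ^ i)) := by ring
    rw [this, hps]
    have h1 : (p - 1) * (m % p) ≤ p - 1 := by
      calc (p - 1) * (m % p) ≤ (p - 1) * 1 := Nat.mul_le_mul_left _ h0
        _ = p - 1 := by ring
    have h2 : p * ((p - 1) * (m / p % p ^ i)) ≤ p * (p ^ i - 1) :=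
      Nat.mul_le_mul_left _ ht
    have h3 : p * (p ^ i - 1) = p * p ^ i - p := by
      rw [Nat.mul_sub, mul_one]
    have h4 : p ≤ p * p ^ i := Nat.le_mul_of_pos_right p hpi
    omega

/-- Every value `n / p ^ i % p` is a digit or zero; here: bounded by 1 if all digits are. -/
lemma aux_digit_le {p : ℕ} (hp : 2 ≤ p) :
    ∀ n, (∀ d ∈ Nat.digits p n, d ≤ 1) → ∀ i, n / p ^ i % p ≤ 1 := by
  intro n
  induction n using Nat.strong_induction_on with
  | _ n ih =>
    intro hd i
    rcases Nat.eq_zero_or_pos n with rfl | hn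
    · simp
    have hdig : Nat.digits p n = n % p :: Nat.digits p (n / p) := Nat.digits_def' hp hn
    cases i with
    | zero =>
      simpa using hd (n % p) (by rw [hdig]; exact List.mem_cons_self)
    | succ i =>
      have hlt : n / p < n := Nat.div_lt_self hn (by omega)
      have : ∀ d ∈ Nat.digits p (n / p), d ≤ 1 := by
        intro d hd'
        exact hd d (by rw [hdig]; exact List.mem_cons_of_mem _ hd')
      have := ih (n / p) hlt this i
      simpa [Nat.div_div_eq_div_mul, pow_succ'] using this
lemma aux_digit_mem {p : ℕ} (hp : 2 ≤ p) :
    ∀ n d, d ∈ Nat.digits p n → ∃ i, n / p ^ i % p = d := by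
  intro n
  induction n using Nat.strong_induction_on with
  | _ n ih =>
    intro d hd
    rcases Nat.eq_zero_or_pos n with rfl | hn
    · simp at hd
    rw [Nat.digits_def' hp hn, List.mem_cons] at hd
    rcases hd with hd | hd
    · exact ⟨0, by simp [hd.symm]⟩
    · obtain ⟨i, hi⟩ := ih (n / p) (Nat.div_lt_self hn (by omega)) d hd
      exact ⟨i + 1, by rw [← hi]; simp [Nat.div_div_eq_div_mul, pow_succ']⟩

/-- Sum of digits as a finite sum. -/
lemma aux_digit_sum {p : ℕ} (hp : 2 ≤ p) :
    ∀ (a n : ℕ), n < p ^ a → ∑ i ∈ Finset.range a, n / p ^ i % p = (Nat.digits p n).sum := by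
  intro a
  induction a with
  | zero =>
    intro n hn
    have : n = 0 := by simpa [Nat.lt_one_iff] using hn
    subst this; simp
  | succ a ih =>
    intro n hn
    rcases Nat.eq_zero_or_pos n with rfl | h0
    · simp
    rw [Nat.digits_def' hp h0]
    rw [Finset.sum_range_succ']
    have hdiv : n / p < p ^ a := by
      apply Nat.div_lt_of_lt_mul
      rw [← pow_succ']; exact hn
    have : ∀ i, n / p ^ (i + 1) % p = (n / p) / p ^ i % p := by
      intro i; rw [Nat.div_div_eq_div_mul, ← pow_succ']
    simp only [this, ih (n / p) hdiv, pow_zero, Nat.div_one, List.sum_cons]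
    omega

theorem stmt_17 (p : ℕ) (hp : p.Prime) (n : ℕ) (hn : 0 < n) :
    ((∀ d ∈ Nat.digits p n, d ≤ 1) →
        (∏ j ∈ Finset.Icc 1 (p - 1), ((j * n).choose n : ZMod p))
          = (-1) ^ (Nat.digits p n).sum)
    ∧ ((∃ d ∈ Nat.digits p n, 1 < d) →
        (∏ j ∈ Finset.Icc 1 (p - 1), ((j * n).choose n : ZMod p)) = 0) := by
  haveI : Fact p.Prime := ⟨hp⟩
  have hp2 : 2 ≤ p := hp.two_le
  constructor
  · -- all digits ≤ 1
    intro hd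
    have hdig : ∀ i, n / p ^ i % p ≤ 1 := aux_digit_le hp2 n hd
    set s := (Nat.digits p n).sum with hs
    have key : ∀ j ∈ Finset.Icc 1 (p - 1), ((j * n).choose n : ZMod p) = (j : ZMod p) ^ s := by
      intro j hj
      rw [Finset.mem_Icc] at hj
      have hjp : j < p := by omega
      -- digits of j*n
      have hdigjn : ∀ i, (j * n) / p ^ i % p = j * (n / p ^ i % p) := by
        intro i
        have hmlow : j * (n % p ^ i) < p ^ i := by
          have := aux_small hp2 i n (fun k _ => hdig k)
          have h1 : j * (n % p ^ i) ≤ (p - 1) * (n % p ^ i) :=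
            Nat.mul_le_mul_right _ (by omega)
          have hpi : 1 ≤ p ^ i := Nat.one_le_pow _ _ (by omega)
          omega
        have hn' : n = p ^ i * (n / p ^ i) + n % p ^ i := (Nat.div_add_mod n (p ^ i)).symm
        have hjn : j * n = p ^ i * (j * (n / p ^ i)) + j * (n % p ^ i) := by
          conv_lhs => rw [hn']
          ring
        have hdivjn : (j * n) / p ^ i = j * (n / p ^ i) := by
          rw [hjn, Nat.mul_add_div (Nat.pow_pos (n := i) (by omega)),
            Nat.div_eq_of_lt hmlow, Nat.add_zero]
        rw [hdivjn]
        have hq : n / p ^ i = n / p ^ i % p + p * (n / p ^ i / p) :=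
          (Nat.mod_add_div _ _).symm
        have : j * (n / p ^ i) = j * (n / p ^ i % p) + (j * (n / p ^ i / p)) * p := by
          conv_lhs => rw [hq]
          ring
        rw [this, Nat.add_mul_mod_self_right]
        exact Nat.mod_eq_of_lt (by
          have := hdig i
          calc j * (n / p ^ i % p) ≤ j * 1 := Nat.mul_le_mul_left _ this
            _ = j := by ring
            _ < p := hjp)
      -- Lucas
      set a := j * n + 1 with ha
      have hjnlt : j * n < p ^ a := lt_trans (by omega) (Nat.lt_pow_self (n := a) (by omega))
      have hnlt : n < p ^ a := lt_of_le_of_lt (Nat.le_mul_of_pos_left n (by omega)) hjnlt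
      have hlucas := Choose.choose_modEq_prod_range_choose_nat (p := p) hjnlt hnlt
      have hprod : ∏ i ∈ Finset.range a, ((j * n) / p ^ i % p).choose (n / p ^ i % p)
          = j ^ s := by
        have : ∀ i ∈ Finset.range a,
            ((j * n) / p ^ i % p).choose (n / p ^ i % p) = j ^ (n / p ^ i % p) := by
          intro i _
          rw [hdigjn i]
          have := hdig i
          rcases Nat.le_one_iff_eq_zero_or_eq_one.mp this with h | h <;>
            rw [h] <;> simp [Nat.choose_one_right]
        rw [Finset.prod_congr rfl this, Finset.prod_pow_eq_pow_sum]
        rw [aux_digit_sum hp2 a n hnlt]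
      rw [hprod] at hlucas
      have := (ZMod.natCast_eq_natCast_iff _ _ _).mpr hlucas
      rw [this]
      push_cast
      ring
    rw [Finset.prod_congr rfl key, Finset.prod_pow]
    have hw : (∏ j ∈ Finset.Icc 1 (p - 1), (j : ZMod p)) = -1 := by
      have h1 : Finset.Icc 1 (p - 1) = Finset.Ico 1 ((p - 1) + 1) :=
        (Finset.Ico_add_one_right_eq_Icc ..).symm
      rw [h1, ← Nat.cast_prod, Finset.prod_Ico_id_eq_factorial, ZMod.wilsons_lemma]
    rw [hw]
  · -- some digit ≥ 2
    rintro ⟨d0, hd0mem, hd0⟩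
    have hex : ∃ i, 2 ≤ n / p ^ i % p := by
      obtain ⟨i, hi⟩ := aux_digit_mem hp2 n d0 hd0mem
      exact ⟨i, by omega⟩
    classical
    obtain ⟨i0, hd2, hlow⟩ : ∃ i, 2 ≤ n / p ^ i % p ∧ ∀ k < i, n / p ^ k % p ≤ 1 :=
      ⟨Nat.find hex, Nat.find_spec hex, fun k hk => by
        have := Nat.find_min hex hk; omega⟩
    obtain ⟨d, hdd⟩ : ∃ x, n / p ^ i0 % p = x := ⟨_, rfl⟩
    rw [hdd] at hd2
    have hdltp : d < p := hdd ▸ Nat.mod_lt _ (by omega)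
    have hp3 : 3 ≤ p := by omega
    obtain ⟨j, hjdef⟩ : ∃ j, j = p / d + 1 := ⟨_, rfl⟩
    have hjle : j ≤ p - 1 := by
      have h1 : p / d ≤ p / 2 := Nat.div_le_div_left (by omega) (by omega)
      omega
    have hndvd : ¬ d ∣ p := by
      intro h
      rcases (Nat.Prime.eq_one_or_self_of_dvd hp d h) with h' | h' <;> omega
    have hmodd : p % d ≠ 0 := fun h => hndvd (Nat.dvd_of_mod_eq_zero h)
    have hdd2 : p / d * d = p - p % d := by
      have := Nat.div_add_mod p d
      rw [Nat.mul_comm] at this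
      omega
    have hmdlt : p % d < d := Nat.mod_lt _ (by omega)
    have hjval : j * d = p / d * d + d := by rw [hjdef]; ring
    have hjd1 : p < j * d := by omega
    have hjd2 : j * d < p + d := by omega
    -- digit i0 of j*n is j*d - p < d
    have hmlow : j * (n % p ^ i0) < p ^ i0 := by
      have := aux_small hp2 i0 n hlow
      have h1 : j * (n % p ^ i0) ≤ (p - 1) * (n % p ^ i0) :=
        Nat.mul_le_mul_right _ (by omega)
      have hpi : 1 ≤ p ^ i0 := Nat.one_le_pow _ _ (by omega)
      omega
    have hdigjn : (j * n) / p ^ i0 % p = j * d - p := by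
      have hn' : n = p ^ i0 * (n / p ^ i0) + n % p ^ i0 := (Nat.div_add_mod n (p ^ i0)).symm
      have hjn : j * n = p ^ i0 * (j * (n / p ^ i0)) + j * (n % p ^ i0) := by
        conv_lhs => rw [hn']
        ring
      have hdivjn : (j * n) / p ^ i0 = j * (n / p ^ i0) := by
        rw [hjn, Nat.mul_add_div (Nat.pow_pos (n := i0) (by omega)),
          Nat.div_eq_of_lt hmlow, Nat.add_zero]
      rw [hdivjn]
      have hq : n / p ^ i0 = d + p * (n / p ^ i0 / p) := by
        rw [← hdd]; exact (Nat.mod_add_div _ _).symm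
      have : j * (n / p ^ i0) = j * d + (j * (n / p ^ i0 / p)) * p := by
        conv_lhs => rw [hq]
        ring
      rw [this, Nat.add_mul_mod_self_right, Nat.mod_eq_sub_mod hjd1.le]
      exact Nat.mod_eq_of_lt (by omega)
    -- Lucas gives p ∣ choose (j*n) n
    obtain ⟨a, hadef⟩ : ∃ a, a = max (i0 + 1) (j * n + 1) := ⟨_, rfl⟩
    have hia : i0 < a := by
      rw [hadef]; exact lt_of_lt_of_le (Nat.lt_succ_self _) (le_max_left _ _)
    have hja : j * n < a := by
      rw [hadef]; exact lt_of_lt_of_le (Nat.lt_succ_self _) (le_max_right _ _)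
    have hjpos : 1 ≤ j := by
      rw [hjdef]; exact Nat.succ_le_succ (Nat.zero_le _)
    have hjnlt : j * n < p ^ a :=
      lt_trans hja (Nat.lt_pow_self (n := a) (by omega))
    have hnlt : n < p ^ a := lt_of_le_of_lt (Nat.le_mul_of_pos_left n (by omega)) hjnlt
    have hlucas := Choose.choose_modEq_prod_range_choose_nat (p := p) hjnlt hnlt
    have hzero : ∏ i ∈ Finset.range a, ((j * n) / p ^ i % p).choose (n / p ^ i % p) = 0 := by
      apply Finset.prod_eq_zero (Finset.mem_range.mpr hia)
      rw [hdigjn]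
      exact Nat.choose_eq_zero_of_lt (by omega)
    rw [hzero] at hlucas
    have hcast : ((j * n).choose n : ZMod p) = 0 := by
      have := (ZMod.natCast_eq_natCast_iff _ _ _).mpr hlucas
      simpa using this
    exact Finset.prod_eq_zero (Finset.mem_Icc.mpr ⟨hjpos, hjle⟩) hcast
end

section
/- For every odd prime p, Σ_{k=0}^{p-1} ((p-1)k)!/(k!)^{p-1} ≡ 1 + (p-1)! - p (mod p²). -/
private lemma multi_spec (p k : ℕ) :
    (k.factorial) ^ (p - 1) * Nat.multinomial (Finset.range (p - 1)) (fun _ => k)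
      = ((p - 1) * k).factorial := by
  have := Nat.multinomial_spec (Finset.range (p - 1)) (fun _ => k)
  simpa [Finset.prod_const, Finset.sum_const, Finset.card_range, smul_eq_mul] using this

private lemma asc_mod (p k : ℕ) :
    (((p + 1).ascFactorial k : ℕ) : ℤ) ≡ (k.factorial : ℤ) [ZMOD (p : ℤ)] := by
  induction k with
  | zero => simp [Nat.ascFactorial_zero]
  | succ k ih =>
    rw [Nat.ascFactorial_succ, Nat.factorial_succ]
    push_cast
    have h1 : ((p : ℤ) + 1 + k) ≡ ((k : ℤ) + 1) [ZMOD (p : ℤ)] :=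
      (Int.modEq_iff_dvd.mpr ⟨1, by ring⟩).symm
    exact h1.mul ih

theorem stmt_18 (p : ℕ) (hp : p.Prime) (hodd : Odd p) :
    (∑ k ∈ Finset.range p, (Nat.multinomial (Finset.range (p - 1)) (fun _ => k) : ℤ))
      ≡ 1 + ((p - 1).factorial : ℤ) - p [ZMOD (p : ℤ) ^ 2] := by
  have hp2 : 2 ≤ p := hp.two_le
  have hpne2 : p ≠ 2 := by
    rintro rfl
    exact (Nat.not_odd_iff_even.mpr (by decide)) hodd
  have hp3 : 3 ≤ p := by omega
  set f : ℕ → ℤ := fun k => (Nat.multinomial (Finset.range (p - 1)) (fun _ => k) : ℤ) with hf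
  -- k = 0
  have h0 : f 0 = 1 := by
    have := multi_spec p 0
    simp only [Nat.factorial_zero, one_pow, one_mul, Nat.mul_zero] at this
    simp [hf, this]
  -- k = 1
  have h1 : f 1 = ((p - 1).factorial : ℤ) := by
    have := multi_spec p 1
    simp only [Nat.factorial_one, one_pow, one_mul, Nat.mul_one] at this
    simp [hf, this]
  -- Wilson and friends, mod p
  have wil : ((p - 1).factorial : ℤ) ≡ -1 [ZMOD (p : ℤ)] := by
    haveI : Fact p.Prime := ⟨hp⟩
    have hw : ((p - 1).factorial : ZMod p) = -1 := ZMod.wilsons_lemma p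
    have : (((p - 1).factorial + 1 : ℕ) : ZMod p) = 0 := by push_cast [hw]; ring
    have hdvd : (p : ℕ) ∣ (p - 1).factorial + 1 := (ZMod.natCast_eq_zero_iff _ _).mp this
    have : (p : ℤ) ∣ ((p - 1).factorial : ℤ) + 1 := by exact_mod_cast Int.natCast_dvd_natCast.mpr hdvd
    have h' : (p : ℤ) ∣ (-1 : ℤ) - ((p - 1).factorial : ℤ) := by
      rw [show (-1 : ℤ) - ((p - 1).factorial : ℤ) = -(((p - 1).factorial : ℤ) + 1) by ring]
      exact dvd_neg.mpr this
    exact Int.modEq_iff_dvd.mpr h'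
  have w2 : ((p - 2).factorial : ℤ) ≡ 1 [ZMOD (p : ℤ)] := by
    have hfac : (p - 1).factorial = (p - 1) * (p - 2).factorial := by
      rw [show p - 1 = (p - 2) + 1 by omega, Nat.factorial_succ]
    have key : ((p - 1).factorial : ℤ) = (p : ℤ) * (p - 2).factorial - (p - 2).factorial := by
      rw [hfac]
      push_cast [Nat.cast_sub (by omega : 1 ≤ p)]
      ring
    have hdvd : (p : ℤ) ∣ 1 - ((p - 2).factorial : ℤ) := by
      have hw := Int.ModEq.dvd wil  -- p ∣ -1 - (p-1)!
      have : (p : ℤ) ∣ (-1 : ℤ) - ((p - 1).factorial : ℤ) := hw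
      rw [key] at this
      have h2 : (p : ℤ) ∣ (-1 : ℤ) - ((p : ℤ) * (p - 2).factorial - (p - 2).factorial)
          + (p : ℤ) * (p - 2).factorial := dvd_add this (Dvd.intro _ rfl)
      have heq : (-1 : ℤ) - ((p : ℤ) * (p - 2).factorial - (p - 2).factorial)
          + (p : ℤ) * (p - 2).factorial = -(1 - ((p - 2).factorial : ℤ)) := by ring
      rw [heq] at h2
      exact (dvd_neg.mp h2)
    exact (Int.modEq_iff_dvd.mpr hdvd)
  -- k = 2 : f 2 ≡ -p mod p^2
  have h2 : f 2 ≡ -(p : ℤ) [ZMOD (p : ℤ) ^ 2] := by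
    have spec2 : 2 ^ (p - 1) * Nat.multinomial (Finset.range (p - 1)) (fun _ => 2)
        = ((p - 1) * 2).factorial := by
      have := multi_spec p 2
      simpa [Nat.factorial_two] using this
    -- factorial decomposition
    have e1 : (p - 1).factorial * p.ascFactorial (p - 1) = ((p - 1) * 2).factorial := by
      have := Nat.factorial_mul_ascFactorial (p - 1) (p - 1)
      rw [show p - 1 + 1 = p by omega] at this
      rw [this, show (p - 1) * 2 = (p - 1) + (p - 1) by ring]
    have e2 : p * (p + 1).ascFactorial (p - 2) = p.ascFactorial (p - 1) := by
      rw [show p - 1 = (p - 2) + 1 by omega, Nat.ascFactorial_succ]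
      exact Nat.succ_ascFactorial p (p - 2)
    have e3 : ((p - 1) * 2).factorial
        = p * ((p - 1).factorial * (p + 1).ascFactorial (p - 2)) := by
      rw [← e1, ← e2]; ring
    -- mod p : (p-1)! * asc ≡ -1
    have comb : ((p - 1).factorial : ℤ) * ((p + 1).ascFactorial (p - 2) : ℤ)
        ≡ (-1) * 1 [ZMOD (p : ℤ)] := wil.mul ((asc_mod p (p - 2)).trans w2)
    have fact1 : (((p - 1) * 2).factorial : ℤ) ≡ -(p : ℤ) [ZMOD (p : ℤ) ^ 2] := by
      rw [Int.modEq_iff_dvd]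
      have hd : (p : ℤ) ∣ ((p - 1).factorial : ℤ) * ((p + 1).ascFactorial (p - 2) : ℤ) + 1 := by
        have := Int.ModEq.dvd comb
        have heq : (-1 : ℤ) * 1 - ((p - 1).factorial : ℤ) * ((p + 1).ascFactorial (p - 2) : ℤ)
            = -(((p - 1).factorial : ℤ) * ((p + 1).ascFactorial (p - 2) : ℤ) + 1) := by ring
        rw [heq] at this
        exact dvd_neg.mp this
      have : (p : ℤ) * (p : ℤ)
          ∣ (p : ℤ) * (((p - 1).factorial : ℤ) * ((p + 1).ascFactorial (p - 2) : ℤ) + 1) :=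
        mul_dvd_mul_left _ hd
      have heq2 : -(p : ℤ) - (((p - 1) * 2).factorial : ℤ)
          = -((p : ℤ) * (((p - 1).factorial : ℤ) * ((p + 1).ascFactorial (p - 2) : ℤ) + 1)) := by
        rw [e3]; push_cast; ring
      rw [heq2, sq]
      exact dvd_neg.mpr this
    -- Fermat : p ∣ 2^(p-1) - 1
    have cop2p : Nat.Coprime 2 p := (Nat.coprime_primes Nat.prime_two hp).mpr (Ne.symm hpne2)
    have fermat : (2 : ℤ) ^ (p - 1) ≡ 1 [ZMOD (p : ℤ)] := by
      have : IsCoprime (2 : ℤ) (p : ℤ) := by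
        exact_mod_cast Nat.isCoprime_iff_coprime.mpr cop2p
      exact Int.ModEq.pow_card_sub_one_eq_one hp this
    have fact2 : (2 : ℤ) ^ (p - 1) * (-(p : ℤ)) ≡ -(p : ℤ) [ZMOD (p : ℤ) ^ 2] := by
      rw [Int.modEq_iff_dvd]
      have hd : (p : ℤ) ∣ (1 : ℤ) - 2 ^ (p - 1) := Int.ModEq.dvd fermat
      have : (p : ℤ) * (p : ℤ) ∣ (p : ℤ) * ((1 : ℤ) - 2 ^ (p - 1)) := mul_dvd_mul_left _ hd
      have heq : -(p : ℤ) - (2 : ℤ) ^ (p - 1) * (-(p : ℤ))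
          = -((p : ℤ) * ((1 : ℤ) - 2 ^ (p - 1))) := by ring
      rw [heq, sq]
      exact dvd_neg.mpr this
    -- combine
    have key : (2 : ℤ) ^ (p - 1) * f 2 ≡ (2 : ℤ) ^ (p - 1) * (-(p : ℤ)) [ZMOD (p : ℤ) ^ 2] := by
      have hcast : (2 : ℤ) ^ (p - 1) * f 2 = (((p - 1) * 2).factorial : ℤ) := by
        show (2 : ℤ) ^ (p - 1) * (Nat.multinomial (Finset.range (p - 1)) (fun _ => 2) : ℤ)
          = (((p - 1) * 2).factorial : ℤ)
        rw [← spec2]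
        push_cast
        ring
      rw [hcast]
      exact fact1.trans fact2.symm
    -- cancel 2^(p-1)
    have cop : IsCoprime ((p : ℤ) ^ 2) ((2 : ℤ) ^ (p - 1)) := by
      have : IsCoprime ((p : ℤ)) ((2 : ℤ)) := by
        exact_mod_cast Nat.isCoprime_iff_coprime.mpr cop2p.symm
      exact this.pow
    have hdvd : ((p : ℤ) ^ 2) ∣ (2 : ℤ) ^ (p - 1) * (-(p : ℤ) - f 2) := by
      have := Int.ModEq.dvd key
      have heq : (2 : ℤ) ^ (p - 1) * (-(p : ℤ)) - (2 : ℤ) ^ (p - 1) * f 2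
          = (2 : ℤ) ^ (p - 1) * (-(p : ℤ) - f 2) := by ring
      rwa [heq] at this
    have : ((p : ℤ) ^ 2) ∣ (-(p : ℤ) - f 2) := cop.dvd_of_dvd_mul_left hdvd
    exact Int.modEq_iff_dvd.mpr this
  -- k ≥ 3 : divisible by p^2
  have hrest : ∀ k ∈ Finset.Ico 3 p, (p : ℤ) ^ 2 ∣ f k := by
    intro k hk
    rw [Finset.mem_Ico] at hk
    obtain ⟨hk3, hkp⟩ := hk
    have hdvdN : p ^ 2 ∣ ((p - 1) * k).factorial := by
      have h2p : p ^ 2 ∣ (2 * p).factorial := by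
        have hfac : (2 * p).factorial = (2 * p) * (2 * p - 1).factorial := by
          rw [show 2 * p = (2 * p - 1) + 1 by omega, Nat.factorial_succ]
          congr 1 <;> omega
        have hd1 : p ∣ 2 * p := dvd_mul_left p 2
        have hd2 : p ∣ (2 * p - 1).factorial := Nat.dvd_factorial (by omega) (by omega)
        rw [hfac, sq]
        exact mul_dvd_mul hd1 hd2
      have hle : 2 * p ≤ (p - 1) * k := by
        calc 2 * p ≤ (p - 1) * 3 := by omega
        _ ≤ (p - 1) * k := Nat.mul_le_mul_left _ hk3
      exact h2p.trans (Nat.factorial_dvd_factorial hle)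
    have copk : Nat.Coprime p (k.factorial) := by
      rw [hp.coprime_iff_not_dvd]
      intro h
      exact absurd ((Nat.Prime.dvd_factorial hp).mp h) (by omega)
    have copk2 : Nat.Coprime (p ^ 2) ((k.factorial) ^ (p - 1)) := Nat.Coprime.pow 2 (p - 1) copk
    have : p ^ 2 ∣ (k.factorial) ^ (p - 1) * Nat.multinomial (Finset.range (p - 1)) (fun _ => k) := by
      rw [multi_spec p k]; exact hdvdN
    have : p ^ 2 ∣ Nat.multinomial (Finset.range (p - 1)) (fun _ => k) :=
      (Nat.Coprime.dvd_of_dvd_mul_left copk2 this)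
    show ((p : ℤ)) ^ 2 ∣ (Nat.multinomial (Finset.range (p - 1)) (fun _ => k) : ℤ)
    exact_mod_cast Int.natCast_dvd_natCast.mpr this
  -- split the sum
  have hsplit : ∑ k ∈ Finset.range p, f k
      = (f 0 + f 1 + f 2) + ∑ k ∈ Finset.Ico 3 p, f k := by
    rw [Finset.range_eq_Ico, ← Finset.sum_Ico_consecutive f (by omega : 0 ≤ 3) (by omega : 3 ≤ p)]
    congr 1
    rw [← Finset.range_eq_Ico]
    simp [Finset.sum_range_succ]
  rw [hsplit, h0, h1]
  have hrest' : (∑ k ∈ Finset.Ico 3 p, f k) ≡ 0 [ZMOD (p : ℤ) ^ 2] :=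
    (Int.modEq_zero_iff_dvd).mpr (Finset.dvd_sum hrest)
  calc 1 + ((p - 1).factorial : ℤ) + f 2 + ∑ k ∈ Finset.Ico 3 p, f k
      ≡ 1 + ((p - 1).factorial : ℤ) + (-(p : ℤ)) + 0 [ZMOD (p : ℤ) ^ 2] :=
        ((Int.ModEq.refl _).add h2).add hrest'
    _ = 1 + ((p - 1).factorial : ℤ) - p := by ring
end

section
/- Let p be a prime, a a positive integer, and m an integer with p > 3 and p | m-4. Then (1/p^a)·Σ_{k=0}^{p^a-1} C(2k,k)/m^k ≡ 1 (mod p), i.e., ν_p(Σ_{k=0}^{p^a-1} C(2k,k)/m^k - p^a) ≥ a+1. -/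
open Finset

section helpers
variable {p : ℕ} [hp : Fact p.Prime]

lemma val_sum {ι : Type*} (s : Finset ι) (F : ι → ℚ) (c : ℤ)
    (h : ∀ i ∈ s, F i = 0 ∨ c ≤ padicValRat p (F i)) :
    (∑ i ∈ s, F i) = 0 ∨ c ≤ padicValRat p (∑ i ∈ s, F i) := by
  induction s using Finset.cons_induction with
  | empty => simp
  | cons i s his ih =>
    rw [Finset.sum_cons]
    rcases h i (Finset.mem_cons_self i s) with h0 | hi
    · rcases ih (fun i hi => h i (Finset.mem_cons_of_mem hi)) with h1 | h1
      · left; rw [h0, h1, add_zero]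
      · right; rwa [h0, zero_add]
    · rcases ih (fun i hi => h i (Finset.mem_cons_of_mem hi)) with h1 | h1
      · right; rwa [h1, add_zero]
      · by_cases hz : F i + ∑ j ∈ s, F j = 0
        · left; exact hz
        · right
          calc c ≤ min (padicValRat p (F i)) (padicValRat p (∑ j ∈ s, F j)) := le_min hi h1
          _ ≤ _ := padicValRat.min_le_padicValRat_add hz

lemma central_mod (a : ℕ) : ((Nat.choose (2 * p ^ a) (p ^ a) : ℤ)) ≡ 2 [ZMOD p] := by
  induction a with
  | zero => simp
  | succ n ih =>
    have h := Choose.choose_modEq_choose_mod_mul_choose_div (p := p) (n := 2 * p ^ (n+1)) (k := p ^ (n+1))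
    have hppos : 0 < p := hp.out.pos
    have h1 : (2 * p ^ (n+1)) % p = 0 := Nat.mod_eq_zero_of_dvd ⟨2 * p ^ n, by ring⟩
    have h2 : (p ^ (n+1)) % p = 0 := Nat.mod_eq_zero_of_dvd ⟨p ^ n, by ring⟩
    have h3 : (2 * p ^ (n+1)) / p = 2 * p ^ n := by
      rw [pow_succ, show 2 * (p ^ n * p) = (2 * p ^ n) * p by ring, Nat.mul_div_cancel _ hppos]
    have h4 : (p ^ (n+1)) / p = p ^ n := by
      rw [pow_succ, Nat.mul_div_cancel _ hppos]
    rw [h1, h2, h3, h4] at h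
    simpa using h.trans (by simpa using ih)

lemma four_pow_mod (a : ℕ) : ((4:ZMod p)) ^ (p ^ a) = 4 := by
  induction a with
  | zero => simp
  | succ n ih => rw [pow_succ, pow_mul, ih, ZMod.pow_card]

lemma five_pow (j : ℕ) (hj : 1 ≤ j) : 2*j+1 < 5^j := by
  induction j with
  | zero => omega
  | succ n ih =>
    rcases Nat.eq_or_lt_of_le hj with h | h
    · simp [← h]
    · have h1 := ih (by omega)
      have h2 : 5^n ≥ 1 := Nat.one_le_pow _ _ (by norm_num)
      calc 2*(n+1)+1 = (2*n+1) + 2 := by ring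
      _ < 5^n + 2 := by omega
      _ ≤ 5^(n+1) := by rw [pow_succ]; omega

lemma v2j1 (hp5 : 3 < p) (j : ℕ) (hj : 1 ≤ j) :
    (padicValNat p (2*j+1) : ℤ) ≤ (j : ℤ) - 1 := by
  have hdvd : p ^ padicValNat p (2*j+1) ∣ 2*j+1 := pow_padicValNat_dvd
  have hle : p ^ padicValNat p (2*j+1) ≤ 2*j+1 := Nat.le_of_dvd (by omega) hdvd
  have h5 : 2*j+1 < 5^j := five_pow j hj
  have hp5' : 5 ≤ p := by
    rcases Nat.lt_or_ge p 5 with h | h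
    · interval_cases p <;> first | omega | exact absurd hp.out (by norm_num)
    · exact h
  have hlt : p ^ padicValNat p (2*j+1) < p ^ j := by
    calc p ^ padicValNat p (2*j+1) ≤ 2*j+1 := hle
    _ < 5^j := h5
    _ ≤ p^j := Nat.pow_le_pow_left hp5' j
  have := Nat.pow_lt_pow_iff_right hp.out.one_lt |>.mp hlt
  omega

lemma choose_val_bound (a : ℕ) (j : ℕ) (hj : j < p ^ a) :
    (a : ℤ) - padicValNat p (j+1) ≤ (padicValNat p (Nat.choose (p^a) (j+1)) : ℤ) := by
  have hN1 : 1 ≤ p ^ a := Nat.one_le_pow _ _ hp.out.pos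
  have key : p ^ a * Nat.choose (p^a-1) j = Nat.choose (p^a) (j+1) * (j+1) := by
    have := Nat.add_one_mul_choose_eq (p^a-1) j
    rwa [Nat.sub_add_cancel hN1] at this
  have hc1 : Nat.choose (p^a-1) j ≠ 0 := Nat.choose_pos (by omega) |>.ne'
  have hc2 : Nat.choose (p^a) (j+1) ≠ 0 := Nat.choose_pos (by omega) |>.ne'
  have hv := congrArg (padicValNat p) key
  rw [padicValNat.mul (by positivity) hc1, padicValNat.mul hc2 (by omega),
    padicValNat.prime_pow] at hv
  omega

lemma alg (j n c c2 x y f : ℚ) (h1 : 2*j+1 ≠ 0) (h2 : n+1 ≠ 0) (h3 : j+1 ≠ 0) (hf : f ≠ 0)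
    (hc : (n+1)*c2 = 2*(2*n+1)*c) (hr : (j+1)*y = (n-j)*x) :
    (2*j+2)/(2*j+1)*y*c/f + x*c/f = (2*j+2)/(2*j+1)*(y+x)*c2/(4*f) := by
  have hc2 : c2 = 2*(2*n+1)*c/(n+1) := by field_simp; linarith
  have hy : y = (n-j)*x/(j+1) := by field_simp; linarith
  subst hc2 hy
  field_simp
  ring

lemma ident (j : ℕ) (N : ℕ) :
    ∑ k ∈ range N, (Nat.choose k j : ℚ) * (Nat.choose (2*k) k) / 4 ^ k
      = (2*j+2)/(2*j+1) * (Nat.choose N (j+1)) * (Nat.choose (2*N) N) / 4 ^ N := by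
  induction N with
  | zero => simp
  | succ n ih =>
    rw [Finset.sum_range_succ, ih]
    have hc : ((n:ℚ)+1) * (Nat.choose (2*(n+1)) (n+1)) = 2 * (2*n+1) * (Nat.choose (2*n) n) := by
      have := Nat.succ_mul_centralBinom_succ n
      rw [Nat.centralBinom, Nat.centralBinom] at this
      exact_mod_cast this
    have hp' : (Nat.choose (n+1) (j+1) : ℚ) = Nat.choose n (j+1) + Nat.choose n j := by
      rw [Nat.choose_succ_succ]; push_cast; ring
    rcases le_or_gt j n with hjn | hjn
    · have hr : ((j:ℚ)+1) * (Nat.choose n (j+1)) = ((n:ℚ)-j) * (Nat.choose n j) := by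
        have h0 := Nat.choose_succ_right_eq n j
        have h' : ((Nat.choose n (j+1) : ℚ)) * ((j:ℚ)+1) = (Nat.choose n j : ℚ) * ((n - j : ℕ) : ℚ) := by
          exact_mod_cast congrArg (Nat.cast (R := ℚ)) h0
        rw [Nat.cast_sub hjn] at h'
        linarith
      rw [hp']
      have := alg (j:ℚ) (n:ℚ) (Nat.choose (2*n) n) (Nat.choose (2*(n+1)) (n+1))
        (Nat.choose n j) (Nat.choose n (j+1)) (4^n)
        (by positivity) (by positivity) (by positivity) (by positivity) hc hr
      rw [show ((4:ℚ)^(n+1)) = 4 * 4^n by ring]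
      linarith [this]
    · have z1 : Nat.choose n j = 0 := Nat.choose_eq_zero_of_lt hjn
      have z2 : Nat.choose n (j+1) = 0 := Nat.choose_eq_zero_of_lt (by omega)
      have z3 : Nat.choose (n+1) (j+1) = 0 := Nat.choose_eq_zero_of_lt (by omega)
      simp [z1, z2, z3]

lemma expand (m : ℚ) (hm : m ≠ 0) (N : ℕ) :
    ∑ k ∈ range N, (Nat.choose (2*k) k : ℚ) / m ^ k
      = ∑ j ∈ range N, ((4-m)/m)^j *
          (∑ k ∈ range N, (Nat.choose k j : ℚ) * (Nat.choose (2*k) k) / 4 ^ k) := by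
  simp_rw [Finset.mul_sum]
  rw [Finset.sum_comm]
  refine Finset.sum_congr rfl fun k hk => ?_
  have hsub : ∑ j ∈ range N, ((4-m)/m)^j * ((Nat.choose k j : ℚ) * (Nat.choose (2*k) k) / 4 ^ k)
      = ∑ j ∈ range (k+1), ((4-m)/m)^j * ((Nat.choose k j : ℚ) * (Nat.choose (2*k) k) / 4 ^ k) := by
    apply (Finset.sum_subset ?_ ?_).symm
    · intro x hx
      simp only [mem_range] at *
      omega
    · intro x hx hx'
      simp only [mem_range] at *
      rw [Nat.choose_eq_zero_of_lt (by omega)]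
      simp
  rw [hsub]
  have hbin : ∑ j ∈ range (k+1), ((4-m)/m)^j * (Nat.choose k j : ℚ)
      = ((4-m)/m + 1)^k := by
    rw [add_pow]
    refine Finset.sum_congr rfl fun j hj => by ring
  have heq : ∑ j ∈ range (k+1), ((4-m)/m)^j * ((Nat.choose k j : ℚ) * (Nat.choose (2*k) k) / 4 ^ k)
      = (∑ j ∈ range (k+1), ((4-m)/m)^j * (Nat.choose k j : ℚ)) * ((Nat.choose (2*k) k) / 4 ^ k) := by
    rw [Finset.sum_mul]
    refine Finset.sum_congr rfl fun j hj => by ring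
  rw [heq, hbin]
  have h4 : (4-m)/m + 1 = 4/m := by field_simp; ring
  rw [h4, div_pow]
  field_simp

end helpers

theorem stmt_19 (p : ℕ) (hp : p.Prime) (h3 : 3 < p) (a : ℕ) (ha : 0 < a) (m : ℤ)
    (hdvd : (p : ℤ) ∣ m - 4) :
    (∑ k ∈ Finset.range (p ^ a), (Nat.choose (2 * k) k : ℚ) / (m : ℚ) ^ k) = (p : ℚ) ^ a ∨
      ((a : ℤ) + 1) ≤
        padicValRat p
          ((∑ k ∈ Finset.range (p ^ a), (Nat.choose (2 * k) k : ℚ) / (m : ℚ) ^ k)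
            - (p : ℚ) ^ a) := by
  haveI hfact : Fact p.Prime := ⟨hp⟩
  set N := p ^ a with hN
  have hNpos : 0 < N := pow_pos hp.pos a
  have hpd4 : ¬ (p ∣ 4) := by
    intro h
    have := Nat.le_of_dvd (by norm_num) h
    interval_cases p <;> revert hp <;> norm_num
  have hpd2 : ¬ (p ∣ 2) := fun h => hpd4 (h.trans ⟨2, rfl⟩)
  have hpm : ¬ ((p:ℤ) ∣ m) := by
    intro h
    have h4 : (p:ℤ) ∣ 4 := by
      have := dvd_sub h hdvd
      simpa using this
    rw [show ((4:ℤ)) = ((4:ℕ):ℤ) by norm_num] at h4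
    exact hpd4 (Int.natCast_dvd_natCast.mp h4)
  have hm0 : m ≠ 0 := by rintro rfl; exact hpm (dvd_zero _)
  have hmQ : (m:ℚ) ≠ 0 := Int.cast_ne_zero.mpr hm0
  set ε : ℚ := (4 - (m:ℚ))/(m:ℚ) with hε
  set c : ℕ := Nat.choose (2*N) N with hc
  have hcpos : 0 < c := Nat.choose_pos (by omega)
  -- the terms
  set F : ℕ → ℚ := fun j =>
    ε^j * ((2*(j:ℚ)+2)/(2*(j:ℚ)+1) * (Nat.choose N (j+1) : ℚ) * (c:ℚ) / 4 ^ N)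
      - (if j = 0 then (p:ℚ)^a else 0) with hF
  have hS : (∑ k ∈ Finset.range N, (Nat.choose (2 * k) k : ℚ) / (m : ℚ) ^ k) - (p:ℚ)^a
      = ∑ j ∈ range N, F j := by
    rw [expand (m:ℚ) hmQ N]
    rw [Finset.sum_congr rfl (fun j _ => by rw [ident j N])]
    rw [hF]
    rw [Finset.sum_sub_distrib]
    congr 1
    rw [Finset.sum_ite_eq' (range N) 0 (fun _ => (p:ℚ)^a)]
    simp [hNpos]
  -- valuation facts
  have h4Q : padicValRat p ((4:ℚ) ^ N) = 0 := by
    rw [padicValRat.pow (4:ℚ),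
      show ((4:ℚ)) = ((4:ℕ):ℚ) by norm_num, padicValRat.of_nat,
      padicValNat.eq_zero_of_not_dvd hpd4]
    ring
  have hterm : ∀ j ∈ range N, F j = 0 ∨ ((a:ℤ)+1) ≤ padicValRat p (F j) := by
    intro j hj
    rw [mem_range] at hj
    rcases Nat.eq_zero_or_pos j with rfl | hj1
    · -- j = 0
      set D : ℤ := 2 * (c:ℤ) - 4 ^ N with hD
      have hF0 : F 0 = ((p:ℚ)^a * ((D:ℤ):ℚ)) / 4 ^ N := by
        simp only [hF, eq_self_iff_true, if_true, pow_zero, Nat.choose_one_right]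
        rw [hD]
        push_cast
        rw [hN]
        push_cast
        field_simp
        rw [Nat.choose_one_right]; push_cast; ring
      by_cases hD0 : D = 0
      · left; rw [hF0, hD0]; simp
      · right
        have hpD : (p:ℤ) ∣ D := by
          have h1 : ((D : ZMod p)) = 0 := by
            rw [hD]
            push_cast
            have hcm : ((c:ℤ) : ZMod p) = 2 := by
              have := (central_mod (p := p) a)
              rw [← hN] at this
              have := (ZMod.intCast_eq_intCast_iff _ _ _).mpr this
              simpa using this
            have h4m : ((4:ZMod p)) ^ N = 4 := by rw [hN]; exact four_pow_mod a
            rw [show (((c:ℤ)):ZMod p) = ((c:ℕ):ZMod p) by push_cast; rfl] at hcm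
            rw [hcm, h4m]
            ring
          exact (ZMod.intCast_zmod_eq_zero_iff_dvd D p).mp h1
        have hvD : (1:ℤ) ≤ padicValInt p D := by
          have := (padicValInt_dvd_iff (p := p) 1 D).mp (by simpa using hpD)
          rcases this with h | h
          · exact absurd h hD0
          · exact_mod_cast h
        rw [hF0]
        have hnum : (p:ℚ)^a * ((D:ℤ):ℚ) ≠ 0 := by
          apply mul_ne_zero (by positivity)
          exact Int.cast_ne_zero.mpr hD0
        rw [padicValRat.div hnum (by positivity),
          padicValRat.mul (by positivity : ((p:ℚ))^a ≠ 0) (Int.cast_ne_zero.mpr hD0),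
          padicValRat.pow (p:ℚ),
          padicValRat.self hp.one_lt, padicValRat.of_int, h4Q]
        have : (a:ℤ) * 1 = a := by ring
        omega
    · -- j ≥ 1
      by_cases hm4 : (4:ℚ) - (m:ℚ) = 0
      · left
        have hε0 : ε = 0 := by rw [hε, hm4, zero_div]
        simp only [hF, hε0]
        rw [if_neg (by omega : ¬ j = 0), zero_pow (by omega : j ≠ 0)]
        simp
      · right
        have hεne : ε ≠ 0 := div_ne_zero hm4 hmQ
        have hvε : (1:ℤ) ≤ padicValRat p ε := by
          have he4 : (4 - (m:ℚ)) = (((4 - m : ℤ)):ℚ) := by push_cast; ring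
          have h4m0 : (4 - m : ℤ) ≠ 0 := by
            intro h; apply hm4; rw [he4, h]; simp
          rw [hε, he4, padicValRat.div (Int.cast_ne_zero.mpr h4m0) hmQ]
          rw [show ((m:ℚ)) = (((m:ℤ)):ℚ) by norm_num, padicValRat.of_int, padicValRat.of_int]
          rw [padicValInt.eq_zero_of_not_dvd hpm]
          have : (p:ℤ) ∣ (4 - m) := by
            have := hdvd.neg_right
            simpa using this
          have h1 : (1:ℤ) ≤ padicValInt p (4 - m) := by
            have := (padicValInt_dvd_iff (p := p) 1 (4-m)).mp (by simpa using this)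
            rcases this with h | h
            · exact absurd h h4m0
            · exact_mod_cast h
          omega
        -- nonzero facts
        have hC : Nat.choose N (j+1) ≠ 0 := (Nat.choose_pos (by omega)).ne'
        have hFj : F j = (ε^j * (((2*j+2:ℕ)):ℚ) * ((Nat.choose N (j+1) : ℕ):ℚ) * ((c:ℕ):ℚ))
            / ((((2*j+1:ℕ)):ℚ) * 4 ^ N) := by
          simp only [hF]
          rw [if_neg (by omega : ¬ j = 0)]
          push_cast
          field_simp
          ring
        have hnum : ε^j * (((2*j+2:ℕ)):ℚ) * ((Nat.choose N (j+1) : ℕ):ℚ) * ((c:ℕ):ℚ) ≠ 0 := by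
          have h1 : ε^j ≠ 0 := pow_ne_zero _ hεne
          have h2 : (((2*j+2:ℕ)):ℚ) ≠ 0 := Nat.cast_ne_zero.mpr (by omega)
          have h3' : ((Nat.choose N (j+1) : ℕ):ℚ) ≠ 0 := Nat.cast_ne_zero.mpr hC
          have h4 : ((c:ℕ):ℚ) ≠ 0 := Nat.cast_ne_zero.mpr hcpos.ne'
          exact mul_ne_zero (mul_ne_zero (mul_ne_zero h1 h2) h3') h4
        have hden : (((2*j+1:ℕ)):ℚ) * 4 ^ N ≠ 0 := by
          apply mul_ne_zero
          · exact Nat.cast_ne_zero.mpr (by omega)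
          · positivity
        rw [hFj, padicValRat.div hnum hden,
          padicValRat.mul (mul_ne_zero (mul_ne_zero (pow_ne_zero _ hεne)
            (Nat.cast_ne_zero.mpr (by omega))) (Nat.cast_ne_zero.mpr hC))
            (Nat.cast_ne_zero.mpr hcpos.ne'),
          padicValRat.mul (mul_ne_zero (pow_ne_zero _ hεne) (Nat.cast_ne_zero.mpr (by omega)))
            (Nat.cast_ne_zero.mpr hC),
          padicValRat.mul (pow_ne_zero _ hεne) (Nat.cast_ne_zero.mpr (by omega : (2*j+2:ℕ) ≠ 0)),
          padicValRat.pow ε,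
          padicValRat.mul (Nat.cast_ne_zero.mpr (by omega : (2*j+1:ℕ) ≠ 0)) (by positivity : (4:ℚ)^N ≠ 0),
          padicValRat.of_nat, padicValRat.of_nat, padicValRat.of_nat, padicValRat.of_nat, h4Q]
        -- now integer arithmetic
        have hv22 : padicValNat p (2*j+2) = padicValNat p (j+1) := by
          rw [show 2*j+2 = 2*(j+1) by ring, padicValNat.mul (by norm_num) (by omega),
            padicValNat.eq_zero_of_not_dvd hpd2]
          omega
        have hvC := choose_val_bound (p := p) a j (by rw [← hN]; exact hj)
        rw [← hN] at hvC
        have hv21 := v2j1 (p := p) h3 j hj1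
        have hjε : (j:ℤ) ≤ (j:ℤ) * padicValRat p ε :=
          le_mul_of_one_le_right (by positivity) hvε
        have hvc : (0:ℤ) ≤ padicValNat p c := by positivity
        rw [hv22]
        linarith
  rcases val_sum (range N) F ((a:ℤ)+1) hterm with h | h
  · left
    have := hS.trans h
    linarith [sub_eq_zero.mp this]
  · right
    rw [hS]
    exact h
end
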